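/- Fix z ∈ ℝ^d and let x ∈ ℝ^d with x ≠ z. Write ψ = ‖z - x‖ and φ = σ(ψ). The function L'(x) = -log(σ(‖z - x‖)) is twice differentiable at x, and its second derivative at x is the symmetric bilinear form (u, v) ↦ (φ(1-φ)/ψ²) · ⟪z - x, u⟫ · ⟪z - x, v⟫ - ((1-φ)/ψ) · (⟪u, v⟫ - ⟪z - x, u⟫ · ⟪z - x, v⟫ / ψ²). -/

import Mathlib

open RealInnerProductSpace

/-- The logistic sigmoid function. -/
noncomputable def sigmoid (t : ℝ) : ℝ := 1 / (1 + Real.exp (-t))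

lemma one_add_exp_pos (t : ℝ) : 0 < 1 + Real.exp (-t) := by positivity

lemma hasDerivAt_one_add_exp (t : ℝ) :
    HasDerivAt (fun t : ℝ => 1 + Real.exp (-t)) (-Real.exp (-t)) t := by
  exact ((hasDerivAt_const t (1:ℝ)).add
    ((Real.hasDerivAt_exp (-t)).comp t ((hasDerivAt_id t).neg))).congr_deriv (by ring)

lemma hasDerivAt_sigmoid (t : ℝ) :
    HasDerivAt sigmoid (sigmoid t * (1 - sigmoid t)) t := by
  have h := (hasDerivAt_one_add_exp t).inv (ne_of_gt (one_add_exp_pos t))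
  have heq : sigmoid = fun t : ℝ => (1 + Real.exp (-t))⁻¹ := by
    funext s; simp [sigmoid, one_div]
  rw [heq]
  refine h.congr_deriv ?_
  have := (one_add_exp_pos t).ne'
  field_simp [sigmoid]
  ring

lemma hasDerivAt_neglog_sigmoid (t : ℝ) :
    HasDerivAt (fun t : ℝ => -Real.log (sigmoid t)) (sigmoid t - 1) t := by
  have h := (hasDerivAt_one_add_exp t).log (ne_of_gt (one_add_exp_pos t))
  have heq : (fun t : ℝ => -Real.log (sigmoid t))
      = fun t : ℝ => Real.log (1 + Real.exp (-t)) := by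
    funext s
    rw [sigmoid, one_div, Real.log_inv, neg_neg]
  rw [heq]
  convert h using 1
  have := (one_add_exp_pos t).ne'
  rw [sigmoid]
  field_simp
  ring

lemma hasFDerivAt_norm' {E : Type*} [NormedAddCommGroup E] [InnerProductSpace ℝ E]
    {x : E} (hx : x ≠ 0) :
    HasFDerivAt (fun y : E => ‖y‖) (‖x‖⁻¹ • innerSL ℝ x) x := by
  have hsq : HasFDerivAt (fun y : E => ‖y‖ ^ 2) (2 • innerSL ℝ x) x :=
    (hasStrictFDerivAt_norm_sq x).hasFDerivAt
  have hne : ‖x‖ ^ 2 ≠ 0 := pow_ne_zero 2 (norm_ne_zero_iff.mpr hx)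
  have h := (Real.hasDerivAt_sqrt hne).comp_hasFDerivAt x hsq
  have heq : (Real.sqrt ∘ fun y : E => ‖y‖ ^ 2) = fun y : E => ‖y‖ := by
    funext y; simp [Real.sqrt_sq (norm_nonneg y)]
  rw [heq] at h
  refine h.congr_fderiv ?_
  ext u
  have hx' : ‖x‖ ≠ 0 := norm_ne_zero_iff.mpr hx
  rw [Real.sqrt_sq (norm_nonneg x)]
  simp [ContinuousLinearMap.smul_apply, smul_smul]
  field_simp

/-- For `x ≠ z`, writing `ψ = ‖z - x‖` and `φ = σ ψ`, the TransE loss term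
`L' x = -log (σ ‖z - x‖)` is twice differentiable at `x`, with second derivative the
symmetric bilinear form
`(u, v) ↦ (φ(1-φ)/ψ²) ⟪z-x, u⟫ ⟪z-x, v⟫ - ((1-φ)/ψ) (⟪u, v⟫ - ⟪z-x, u⟫ ⟪z-x, v⟫ / ψ²)`. -/
theorem transE_loss_hessian (d : ℕ) (z x : EuclideanSpace ℝ (Fin d)) (hx : x ≠ z) :
    DifferentiableAt ℝ
      (fun x : EuclideanSpace ℝ (Fin d) => -Real.log (sigmoid ‖z - x‖)) x ∧
    DifferentiableAt ℝ
      (fderiv ℝ (fun x : EuclideanSpace ℝ (Fin d) => -Real.log (sigmoid ‖z - x‖))) x ∧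
    ∀ u v : EuclideanSpace ℝ (Fin d),
      fderiv ℝ (fderiv ℝ
          (fun x : EuclideanSpace ℝ (Fin d) => -Real.log (sigmoid ‖z - x‖))) x u v =
        (sigmoid ‖z - x‖ * (1 - sigmoid ‖z - x‖) / ‖z - x‖ ^ 2) *
            (⟪z - x, u⟫ * ⟪z - x, v⟫) -
          ((1 - sigmoid ‖z - x‖) / ‖z - x‖) *
            (⟪u, v⟫ - ⟪z - x, u⟫ * ⟪z - x, v⟫ / ‖z - x‖ ^ 2) := by
  set L : EuclideanSpace ℝ (Fin d) → ℝ :=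
    fun x => -Real.log (sigmoid ‖z - x‖) with hL
  set G : EuclideanSpace ℝ (Fin d) → (EuclideanSpace ℝ (Fin d) →L[ℝ] ℝ) :=
    fun y => ((1 - sigmoid ‖z - y‖) / ‖z - y‖) • innerSL ℝ (z - y) with hG
  -- derivative of y ↦ z - y
  have hm : ∀ y : EuclideanSpace ℝ (Fin d), HasFDerivAt (fun w : EuclideanSpace ℝ (Fin d) => z - w)
      (-(ContinuousLinearMap.id ℝ (EuclideanSpace ℝ (Fin d)))) y :=
    fun y => (hasFDerivAt_id y).const_sub z
  -- derivative of y ↦ ‖z - y‖ at y ≠ z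
  have hn : ∀ y : EuclideanSpace ℝ (Fin d), y ≠ z →
      HasFDerivAt (fun w : EuclideanSpace ℝ (Fin d) => ‖z - w‖)
      ((‖z - y‖⁻¹ • innerSL ℝ (z - y)).comp
        (-(ContinuousLinearMap.id ℝ (EuclideanSpace ℝ (Fin d))))) y := by
    intro y hy
    exact (hasFDerivAt_norm' (sub_ne_zero.mpr (Ne.symm hy))).comp y (hm y)
  -- first derivative of L at any y ≠ z
  have hL1 : ∀ y : EuclideanSpace ℝ (Fin d), y ≠ z → HasFDerivAt L (G y) y := by
    intro y hy
    have hzy : z - y ≠ 0 := sub_ne_zero.mpr (Ne.symm hy)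
    have hψ : ‖z - y‖ ≠ 0 := norm_ne_zero_iff.mpr hzy
    have h := (hasDerivAt_neglog_sigmoid ‖z - y‖).comp_hasFDerivAt y (hn y hy)
    refine h.congr_fderiv ?_
    ext u
    simp [hG, ContinuousLinearMap.smul_apply, inner_neg_right]
    field_simp
    ring
  have hxz : x ≠ z := hx
  have hfd : HasFDerivAt L (G x) x := hL1 x hxz
  refine ⟨hfd.differentiableAt, ?_⟩
  -- fderiv L = G near x
  have hev : fderiv ℝ L =ᶠ[nhds x] G := by
    have hopen : ∀ᶠ y in nhds x, y ≠ z := IsOpen.eventually_mem isOpen_ne hxz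
    filter_upwards [hopen] with y hy
    exact (hL1 y hy).fderiv
  -- derivative of G at x
  have hzx : z - x ≠ 0 := sub_ne_zero.mpr (Ne.symm hxz)
  have hψ : ‖z - x‖ ≠ 0 := norm_ne_zero_iff.mpr hzx
  -- scalar function c(y) = (1 - sigmoid ‖z-y‖)/‖z-y‖
  have hh : HasDerivAt (fun t : ℝ => (1 - sigmoid t) / t)
      (((0 - sigmoid ‖z - x‖ * (1 - sigmoid ‖z - x‖)) * ‖z - x‖ -
        (1 - sigmoid ‖z - x‖) * 1) / ‖z - x‖ ^ 2) ‖z - x‖ :=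
    ((hasDerivAt_const _ (1:ℝ)).sub (hasDerivAt_sigmoid _)).div (hasDerivAt_id _) hψ
  have hc : HasFDerivAt (fun y : EuclideanSpace ℝ (Fin d) => (1 - sigmoid ‖z - y‖) / ‖z - y‖)
      ((((0 - sigmoid ‖z - x‖ * (1 - sigmoid ‖z - x‖)) * ‖z - x‖ -
        (1 - sigmoid ‖z - x‖) * 1) / ‖z - x‖ ^ 2) •
        ((‖z - x‖⁻¹ • innerSL ℝ (z - x)).comp
          (-(ContinuousLinearMap.id ℝ (EuclideanSpace ℝ (Fin d)))))) x :=
    by have := hh.comp_hasFDerivAt x (hn x hxz); exact this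
  have hBdef : ∃ Bc : EuclideanSpace ℝ (Fin d) →L[ℝ] (EuclideanSpace ℝ (Fin d) →L[ℝ] ℝ),
      ∀ w, Bc w = innerSL ℝ w := ⟨innerSL ℝ, fun _ => rfl⟩
  obtain ⟨Bc, hBc⟩ := hBdef
  have hB : HasFDerivAt (fun y : EuclideanSpace ℝ (Fin d) => innerSL ℝ (z - y))
      (Bc.comp (-(ContinuousLinearMap.id ℝ (EuclideanSpace ℝ (Fin d))))) x := by
    have h := Bc.hasFDerivAt.comp x (hm x)
    have hfun : (⇑Bc ∘ fun w : EuclideanSpace ℝ (Fin d) => z - w)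
        = fun y : EuclideanSpace ℝ (Fin d) => innerSL ℝ (z - y) :=
      funext fun y => hBc _
    rwa [hfun] at h
  have hGd : HasFDerivAt G
      (((1 - sigmoid ‖z - x‖) / ‖z - x‖) •
          (Bc.comp (-(ContinuousLinearMap.id ℝ (EuclideanSpace ℝ (Fin d))))) +
        ((((0 - sigmoid ‖z - x‖ * (1 - sigmoid ‖z - x‖)) * ‖z - x‖ -
          (1 - sigmoid ‖z - x‖) * 1) / ‖z - x‖ ^ 2) •
          ((‖z - x‖⁻¹ • innerSL ℝ (z - x)).comp
            (-(ContinuousLinearMap.id ℝ (EuclideanSpace ℝ (Fin d)))))).smulRight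
          (innerSL ℝ (z - x))) x :=
    hc.smul hB
  refine ⟨?_, ?_⟩
  · exact hev.symm.differentiableAt_iff.mp hGd.differentiableAt
  · intro u v
    rw [hev.fderiv_eq, hGd.fderiv]
    simp only [ContinuousLinearMap.add_apply, ContinuousLinearMap.smul_apply,
      ContinuousLinearMap.comp_apply, ContinuousLinearMap.smulRight_apply,
      ContinuousLinearMap.neg_apply, ContinuousLinearMap.coe_id', id_eq,
      innerSL_apply_apply, inner_neg_left, inner_neg_right, smul_eq_mul, hBc]
    field_simp
    ring
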